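/- Let Q be a quasi-copula on [0,1]² with α_Q < ∞, where α_Q = sup_{n≥1} max{ max_i 2ⁿ Σ_{j=1}^{2ⁿ} V_Q(R_{ij}ⁿ)⁺ , max_j 2ⁿ Σ_{i=1}^{2ⁿ} V_Q(R_{ij}ⁿ)⁺ } with R_{ij}ⁿ = [(i−1)/2ⁿ, i/2ⁿ]×[(j−1)/2ⁿ, j/2ⁿ]. Then there exist copulas C and D and a real number α ≥ 1 such that Q = αC + (1−α)D. -/

import Mathlib

open Set

/-- A bivariate copula (conditions imposed on the unit square). -/
def IsCopula (C : ℝ → ℝ → ℝ) : Prop :=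
  (∀ x ∈ Icc (0:ℝ) 1, C x 0 = 0 ∧ C 0 x = 0 ∧ C x 1 = x ∧ C 1 x = x) ∧
  (∀ x₁ ∈ Icc (0:ℝ) 1, ∀ x₂ ∈ Icc (0:ℝ) 1, ∀ y₁ ∈ Icc (0:ℝ) 1, ∀ y₂ ∈ Icc (0:ℝ) 1,
    x₁ ≤ x₂ → y₁ ≤ y₂ → 0 ≤ C x₂ y₂ - C x₁ y₂ - C x₂ y₁ + C x₁ y₁)

/-- A bivariate quasi-copula (conditions imposed on the unit square). -/
def IsQuasiCopula (Q : ℝ → ℝ → ℝ) : Prop :=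
  (∀ x ∈ Icc (0:ℝ) 1, Q x 0 = 0 ∧ Q 0 x = 0 ∧ Q x 1 = x ∧ Q 1 x = x) ∧
  (∀ x₁ ∈ Icc (0:ℝ) 1, ∀ x₂ ∈ Icc (0:ℝ) 1, ∀ y ∈ Icc (0:ℝ) 1,
    x₁ ≤ x₂ → Q x₁ y ≤ Q x₂ y) ∧
  (∀ x ∈ Icc (0:ℝ) 1, ∀ y₁ ∈ Icc (0:ℝ) 1, ∀ y₂ ∈ Icc (0:ℝ) 1,
    y₁ ≤ y₂ → Q x y₁ ≤ Q x y₂) ∧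
  (∀ x₁ ∈ Icc (0:ℝ) 1, ∀ x₂ ∈ Icc (0:ℝ) 1, ∀ y₁ ∈ Icc (0:ℝ) 1, ∀ y₂ ∈ Icc (0:ℝ) 1,
    |Q x₂ y₂ - Q x₁ y₁| ≤ |x₂ - x₁| + |y₂ - y₁|)

/-- Q-volume of the dyadic rectangle R_{ij}^n = [i/2^n,(i+1)/2^n] × [j/2^n,(j+1)/2^n]
(indices shifted by one with respect to the paper). -/
noncomputable def dyadVol (Q : ℝ → ℝ → ℝ) (n : ℕ) (i j : Fin (2^n)) : ℝ :=
  Q (((i : ℕ) + 1) / 2^n) (((j : ℕ) + 1) / 2^n)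
    - Q ((i : ℕ) / 2^n) (((j : ℕ) + 1) / 2^n)
    - Q (((i : ℕ) + 1) / 2^n) ((j : ℕ) / 2^n)
    + Q ((i : ℕ) / 2^n) ((j : ℕ) / 2^n)

/-- The set of all row/column sums of positive parts of dyadic volumes, normalized by
strip width; α_Q is its supremum. -/
noncomputable def alphaSet (Q : ℝ → ℝ → ℝ) : Set ℝ :=
  {r | ∃ n : ℕ, 1 ≤ n ∧
    ((∃ i : Fin (2^n), r = 2^n * ∑ j : Fin (2^n), max (dyadVol Q n i j) 0) ∨
     (∃ j : Fin (2^n), r = 2^n * ∑ i : Fin (2^n), max (dyadVol Q n i j) 0))}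

namespace S15

/-- Q-volume of rectangle [a,c] × [b,d]. -/
def VQ (Q : ℝ → ℝ → ℝ) (a b c d : ℝ) : ℝ := Q c d - Q a d - Q c b + Q a b

/-- volume of dyadic cell (i,j) at level n, indices in ℕ. -/
noncomputable def cV (Q : ℝ → ℝ → ℝ) (n i j : ℕ) : ℝ :=
  VQ Q ((i:ℝ)/2^n) ((j:ℝ)/2^n) (((i:ℝ)+1)/2^n) (((j:ℝ)+1)/2^n)

noncomputable def posV (Q : ℝ → ℝ → ℝ) (n i j : ℕ) : ℝ := max (cV Q n i j) 0
noncomputable def negV (Q : ℝ → ℝ → ℝ) (n i j : ℕ) : ℝ := max (-(cV Q n i j)) 0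

lemma negV_nonneg (Q n i j) : 0 ≤ negV Q n i j := le_max_right _ _
lemma posV_nonneg (Q n i j) : 0 ≤ posV Q n i j := le_max_right _ _
lemma posV_sub_negV (Q n i j) : posV Q n i j - negV Q n i j = cV Q n i j := by
  unfold posV negV
  rcases le_total (cV Q n i j) 0 with h | h
  · rw [max_eq_right h, max_eq_left (by linarith)]; ring
  · rw [max_eq_left h, max_eq_right (by linarith)]; ring

lemma coord_double (n i : ℕ) : ((2*i : ℕ) : ℝ)/2^(n+1) = (i:ℝ)/2^n := by
  push_cast; rw [pow_succ]; field_simp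

lemma coord_double' (n i : ℕ) : (((2*i : ℕ) : ℝ)+2)/2^(n+1) = ((i:ℝ)+1)/2^n := by
  push_cast; rw [pow_succ]; field_simp

/-- quartering a cell -/
lemma cV_quarter (Q : ℝ → ℝ → ℝ) (n i j : ℕ) :
    cV Q n i j = cV Q (n+1) (2*i) (2*j) + cV Q (n+1) (2*i+1) (2*j)
      + cV Q (n+1) (2*i) (2*j+1) + cV Q (n+1) (2*i+1) (2*j+1) := by
  unfold cV VQ
  have e1 : ((2*i : ℕ) : ℝ)/2^(n+1) = (i:ℝ)/2^n := coord_double n i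
  have e2 : (((2*i+1 : ℕ) : ℝ)+1)/2^(n+1) = ((i:ℝ)+1)/2^n := by
    push_cast; rw [pow_succ]; field_simp; ring
  have e3 : ((2*j : ℕ) : ℝ)/2^(n+1) = (j:ℝ)/2^n := coord_double n j
  have e4 : (((2*j+1 : ℕ) : ℝ)+1)/2^(n+1) = ((j:ℝ)+1)/2^n := by
    push_cast; rw [pow_succ]; field_simp; ring
  have e5 : ((2*i : ℕ) : ℝ)+1 = ((2*i+1 : ℕ) : ℝ) := by push_cast; ring
  have e6 : ((2*j : ℕ) : ℝ)+1 = ((2*j+1 : ℕ) : ℝ) := by push_cast; ring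
  rw [e5, e6, e1, e2, e3, e4]
  ring

lemma negV_quarter (Q : ℝ → ℝ → ℝ) (n i j : ℕ) :
    negV Q n i j ≤ negV Q (n+1) (2*i) (2*j) + negV Q (n+1) (2*i+1) (2*j)
      + negV Q (n+1) (2*i) (2*j+1) + negV Q (n+1) (2*i+1) (2*j+1) := by
  unfold negV
  apply max_le
  · rw [cV_quarter Q n i j]
    have h1 := le_max_left (-(cV Q (n+1) (2*i) (2*j))) 0
    have h2 := le_max_left (-(cV Q (n+1) (2*i+1) (2*j))) 0
    have h3 := le_max_left (-(cV Q (n+1) (2*i) (2*j+1))) 0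
    have h4 := le_max_left (-(cV Q (n+1) (2*i+1) (2*j+1))) 0
    linarith
  · have := negV_nonneg Q (n+1) (2*i) (2*j)
    have := negV_nonneg Q (n+1) (2*i+1) (2*j)
    have := negV_nonneg Q (n+1) (2*i) (2*j+1)
    have := negV_nonneg Q (n+1) (2*i+1) (2*j+1)
    unfold negV at *
    linarith

lemma sum_range_two_mul (g : ℕ → ℝ) (p : ℕ) :
    ∑ i ∈ Finset.range (2*p), g i = ∑ i ∈ Finset.range p, (g (2*i) + g (2*i+1)) := by
  induction p with
  | zero => simp
  | succ p ih =>
    have : 2*(p+1) = (2*p+1)+1 := by ring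
    rw [this, Finset.sum_range_succ, Finset.sum_range_succ, ih, Finset.sum_range_succ]
    ring

/-- cumulative sum of negative parts -/
noncomputable def S (Q : ℝ → ℝ → ℝ) (n p q : ℕ) : ℝ :=
  ∑ i ∈ Finset.range p, ∑ j ∈ Finset.range q, negV Q n i j

lemma S_nonneg (Q n p q) : 0 ≤ S Q n p q :=
  Finset.sum_nonneg fun _ _ => Finset.sum_nonneg fun _ _ => negV_nonneg _ _ _ _

lemma S_mono_p (Q : ℝ → ℝ → ℝ) (n : ℕ) {p p' : ℕ} (h : p ≤ p') (q : ℕ) :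
    S Q n p q ≤ S Q n p' q := by
  apply Finset.sum_le_sum_of_subset_of_nonneg (Finset.range_subset_range.2 h)
  intro i _ _
  exact Finset.sum_nonneg fun _ _ => negV_nonneg _ _ _ _

lemma S_mono_q (Q : ℝ → ℝ → ℝ) (n p : ℕ) {q q' : ℕ} (h : q ≤ q') :
    S Q n p q ≤ S Q n p q' := by
  apply Finset.sum_le_sum
  intro i _
  apply Finset.sum_le_sum_of_subset_of_nonneg (Finset.range_subset_range.2 h)
  intro j _ _
  exact negV_nonneg _ _ _ _

lemma S_refine (Q : ℝ → ℝ → ℝ) (n p q : ℕ) : S Q n p q ≤ S Q (n+1) (2*p) (2*q) := by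
  unfold S
  rw [sum_range_two_mul]
  have hx : ∀ i, ∑ j ∈ Finset.range (2*q), negV Q (n+1) (2*i) j
      + ∑ j ∈ Finset.range (2*q), negV Q (n+1) (2*i+1) j
      = ∑ j ∈ Finset.range q, (negV Q (n+1) (2*i) (2*j) + negV Q (n+1) (2*i) (2*j+1)
          + (negV Q (n+1) (2*i+1) (2*j) + negV Q (n+1) (2*i+1) (2*j+1))) := by
    intro i
    rw [sum_range_two_mul, sum_range_two_mul, ← Finset.sum_add_distrib]
  calc ∑ i ∈ Finset.range p, ∑ j ∈ Finset.range q, negV Q n i j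
      ≤ ∑ i ∈ Finset.range p, ∑ j ∈ Finset.range q,
          (negV Q (n+1) (2*i) (2*j) + negV Q (n+1) (2*i) (2*j+1)
            + (negV Q (n+1) (2*i+1) (2*j) + negV Q (n+1) (2*i+1) (2*j+1))) := by
        apply Finset.sum_le_sum; intro i _
        apply Finset.sum_le_sum; intro j _
        have := negV_quarter Q n i j; linarith
    _ = ∑ i ∈ Finset.range p, (∑ j ∈ Finset.range (2*q), negV Q (n+1) (2*i) j
          + ∑ j ∈ Finset.range (2*q), negV Q (n+1) (2*i+1) j) := by
        apply Finset.sum_congr rfl; intro i _; rw [hx i]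

lemma S_refine_iter (Q : ℝ → ℝ → ℝ) (n p q t : ℕ) :
    S Q n p q ≤ S Q (n+t) (p*2^t) (q*2^t) := by
  induction t with
  | zero => simp
  | succ t ih =>
    calc S Q n p q ≤ S Q (n+t) (p*2^t) (q*2^t) := ih
    _ ≤ S Q (n+t+1) (2*(p*2^t)) (2*(q*2^t)) := S_refine _ _ _ _
    _ = S Q (n+(t+1)) (p*2^(t+1)) (q*2^(t+1)) := by
        congr 1 <;> ring


lemma two_pow_pos (n : ℕ) : (0:ℝ) < 2^n := by positivity

lemma dmem {n i : ℕ} (h : i ≤ 2^n) : ((i:ℝ)/2^n) ∈ Set.Icc (0:ℝ) 1 := by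
  constructor
  · positivity
  · rw [div_le_one (two_pow_pos n)]
    exact_mod_cast h

section WithHyp

variable {Q : ℝ → ℝ → ℝ} {A : ℝ}

/-- telescoping a row of cells -/
lemma row_telescope (Q : ℝ → ℝ → ℝ) (n i q : ℕ) :
    ∑ j ∈ Finset.range q, cV Q n i j
      = VQ Q ((i:ℝ)/2^n) 0 (((i:ℝ)+1)/2^n) ((q:ℝ)/2^n) := by
  induction q with
  | zero => simp [VQ]
  | succ q ih =>
    rw [Finset.sum_range_succ, ih]
    unfold cV VQ
    push_cast
    ring_nf

/-- telescoping the full rectangle [0,p/2^n] × [0,q/2^n] -/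
lemma rect_telescope (Q : ℝ → ℝ → ℝ) (n p q : ℕ) :
    ∑ i ∈ Finset.range p, ∑ j ∈ Finset.range q, cV Q n i j
      = VQ Q 0 0 ((p:ℝ)/2^n) ((q:ℝ)/2^n) := by
  induction p with
  | zero => simp [VQ]
  | succ p ih =>
    rw [Finset.sum_range_succ, ih, row_telescope]
    unfold VQ
    push_cast
    ring_nf

/-- double sum over an Ico × Ico block equals the rectangle volume -/
lemma block_telescope (Q : ℝ → ℝ → ℝ) (n : ℕ) {p₁ p₂ q₁ q₂ : ℕ}
    (hp : p₁ ≤ p₂) (hq : q₁ ≤ q₂) :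
    ∑ i ∈ Finset.Ico p₁ p₂, ∑ j ∈ Finset.Ico q₁ q₂, cV Q n i j
      = VQ Q ((p₁:ℝ)/2^n) ((q₁:ℝ)/2^n) ((p₂:ℝ)/2^n) ((q₂:ℝ)/2^n) := by
  have inner : ∀ i, ∑ j ∈ Finset.Ico q₁ q₂, cV Q n i j
      = ∑ j ∈ Finset.range q₂, cV Q n i j - ∑ j ∈ Finset.range q₁, cV Q n i j := by
    intro i
    exact Finset.sum_Ico_eq_sub _ hq
  calc ∑ i ∈ Finset.Ico p₁ p₂, ∑ j ∈ Finset.Ico q₁ q₂, cV Q n i j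
      = ∑ i ∈ Finset.Ico p₁ p₂, (∑ j ∈ Finset.range q₂, cV Q n i j
          - ∑ j ∈ Finset.range q₁, cV Q n i j) := by
        exact Finset.sum_congr rfl fun i _ => inner i
    _ = (∑ i ∈ Finset.Ico p₁ p₂, ∑ j ∈ Finset.range q₂, cV Q n i j)
        - ∑ i ∈ Finset.Ico p₁ p₂, ∑ j ∈ Finset.range q₁, cV Q n i j := by
        rw [Finset.sum_sub_distrib]
    _ = ((∑ i ∈ Finset.range p₂, ∑ j ∈ Finset.range q₂, cV Q n i j)
          - ∑ i ∈ Finset.range p₁, ∑ j ∈ Finset.range q₂, cV Q n i j)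
        - ((∑ i ∈ Finset.range p₂, ∑ j ∈ Finset.range q₁, cV Q n i j)
          - ∑ i ∈ Finset.range p₁, ∑ j ∈ Finset.range q₁, cV Q n i j) := by
        rw [Finset.sum_Ico_eq_sub (fun i => ∑ j ∈ Finset.range q₂, cV Q n i j) hp,
          Finset.sum_Ico_eq_sub (fun i => ∑ j ∈ Finset.range q₁, cV Q n i j) hp]
    _ = _ := by
        rw [rect_telescope, rect_telescope, rect_telescope, rect_telescope]
        unfold VQ; ring

/-- same for negV and S -/
lemma block_negV (Q : ℝ → ℝ → ℝ) (n : ℕ) {p₁ p₂ q₁ q₂ : ℕ}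
    (hp : p₁ ≤ p₂) (hq : q₁ ≤ q₂) :
    ∑ i ∈ Finset.Ico p₁ p₂, ∑ j ∈ Finset.Ico q₁ q₂, negV Q n i j
      = S Q n p₂ q₂ - S Q n p₁ q₂ - S Q n p₂ q₁ + S Q n p₁ q₁ := by
  have inner : ∀ i, ∑ j ∈ Finset.Ico q₁ q₂, negV Q n i j
      = ∑ j ∈ Finset.range q₂, negV Q n i j - ∑ j ∈ Finset.range q₁, negV Q n i j := by
    intro i
    exact Finset.sum_Ico_eq_sub _ hq
  unfold S
  calc ∑ i ∈ Finset.Ico p₁ p₂, ∑ j ∈ Finset.Ico q₁ q₂, negV Q n i j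
      = (∑ i ∈ Finset.Ico p₁ p₂, ∑ j ∈ Finset.range q₂, negV Q n i j)
        - ∑ i ∈ Finset.Ico p₁ p₂, ∑ j ∈ Finset.range q₁, negV Q n i j := by
        rw [← Finset.sum_sub_distrib]
        exact Finset.sum_congr rfl fun i _ => inner i
    _ = _ := by
        rw [Finset.sum_Ico_eq_sub (fun i => ∑ j ∈ Finset.range q₂, negV Q n i j) hp,
          Finset.sum_Ico_eq_sub (fun i => ∑ j ∈ Finset.range q₁, negV Q n i j) hp]
        ring

variable (hM : ∀ x ∈ Set.Icc (0:ℝ) 1, Q x 0 = 0 ∧ Q 0 x = 0 ∧ Q x 1 = x ∧ Q 1 x = x)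
variable (hA1 : 1 ≤ A)
variable (hrow : ∀ n, 1 ≤ n → ∀ i, i < 2^n →
    ∑ j ∈ Finset.range (2^n), posV Q n i j ≤ A/2^n)

include hM in
/-- full row of cell volumes sums to 1/2^n -/
lemma row_total {n i : ℕ} (hi : i < 2^n) :
    ∑ j ∈ Finset.range (2^n), cV Q n i j = 1/2^n := by
  rw [row_telescope]
  have h1 : ((i:ℝ)/2^n) ∈ Set.Icc (0:ℝ) 1 := dmem (le_of_lt hi)
  have h2 : (((i:ℝ)+1)/2^n) ∈ Set.Icc (0:ℝ) 1 := by
    have : ((i:ℝ)+1) = ((i+1 : ℕ):ℝ) := by push_cast; ring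
    rw [this]; exact dmem hi
  have e1 : ((2^n : ℕ):ℝ)/2^n = 1 := by
    rw [div_eq_one_iff_eq (ne_of_gt (two_pow_pos n))]; push_cast; ring
  rw [e1]
  unfold VQ
  rw [(hM _ h1).1, (hM _ h2).1, (hM _ h1).2.2.1, (hM _ h2).2.2.1]
  field_simp
  ring

include hM hrow in
lemma negRow {n i : ℕ} (hn : 1 ≤ n) (hi : i < 2^n) :
    ∑ j ∈ Finset.range (2^n), negV Q n i j ≤ (A-1)/2^n := by
  have h1 : ∑ j ∈ Finset.range (2^n), (posV Q n i j - negV Q n i j) = 1/2^n := by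
    calc ∑ j ∈ Finset.range (2^n), (posV Q n i j - negV Q n i j)
        = ∑ j ∈ Finset.range (2^n), cV Q n i j :=
          Finset.sum_congr rfl fun j _ => posV_sub_negV Q n i j
      _ = 1/2^n := row_total hM hi
  rw [Finset.sum_sub_distrib] at h1
  have h2 := hrow n hn i hi
  have : (A-1)/2^n = A/2^n - 1/2^n := by ring
  rw [this]
  linarith

include hM hrow in
/-- S difference bound: slab mass -/
lemma S_diff {n p₁ p₂ q : ℕ} (hn : 1 ≤ n) (hp : p₁ ≤ p₂) (hp2 : p₂ ≤ 2^n)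
    (hq : q ≤ 2^n) :
    S Q n p₂ q - S Q n p₁ q ≤ (A-1) * (((p₂:ℝ)-p₁)/2^n) := by
  have key : S Q n p₂ q - S Q n p₁ q
      = ∑ i ∈ Finset.Ico p₁ p₂, ∑ j ∈ Finset.range q, negV Q n i j := by
    unfold S
    exact (Finset.sum_Ico_eq_sub _ hp).symm
  rw [key]
  calc ∑ i ∈ Finset.Ico p₁ p₂, ∑ j ∈ Finset.range q, negV Q n i j
      ≤ ∑ i ∈ Finset.Ico p₁ p₂, ((A-1)/2^n) := by
        apply Finset.sum_le_sum
        intro i hi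
        simp only [Finset.mem_Ico] at hi
        calc ∑ j ∈ Finset.range q, negV Q n i j
            ≤ ∑ j ∈ Finset.range (2^n), negV Q n i j := by
              apply Finset.sum_le_sum_of_subset_of_nonneg (Finset.range_subset_range.2 hq)
              intro j _ _; exact negV_nonneg _ _ _ _
          _ ≤ (A-1)/2^n := negRow hM hrow hn (lt_of_lt_of_le hi.2 hp2)
    _ = ((p₂ - p₁ : ℕ):ℝ) * ((A-1)/2^n) := by
        rw [Finset.sum_const, Nat.card_Ico, nsmul_eq_mul]
    _ = (A-1) * (((p₂:ℝ)-p₁)/2^n) := by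
        rw [Nat.cast_sub hp]; ring

include hM hA1 hrow in
lemma S_le {n p q : ℕ} (hn : 1 ≤ n) (hp : p ≤ 2^n) (hq : q ≤ 2^n) :
    S Q n p q ≤ A - 1 := by
  have h0 : S Q n 0 q = 0 := by unfold S; simp
  have := S_diff hM hrow hn (Nat.zero_le p) hp hq
  rw [h0] at this
  have hple : ((p:ℝ)-0)/2^n ≤ 1 := by
    rw [sub_zero, div_le_one (two_pow_pos n)]
    exact_mod_cast hp
  nlinarith [two_pow_pos n]


omit hM in
lemma col_telescope (n j p : ℕ) :
    ∑ i ∈ Finset.range p, cV Q n i j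
      = VQ Q 0 ((j:ℝ)/2^n) ((p:ℝ)/2^n) (((j:ℝ)+1)/2^n) := by
  induction p with
  | zero => simp [VQ]
  | succ p ih =>
    rw [Finset.sum_range_succ, ih]
    unfold cV VQ
    push_cast
    ring_nf

include hM in
lemma col_total {n j : ℕ} (hj : j < 2^n) :
    ∑ i ∈ Finset.range (2^n), cV Q n i j = 1/2^n := by
  rw [col_telescope]
  have h1 : ((j:ℝ)/2^n) ∈ Set.Icc (0:ℝ) 1 := dmem (le_of_lt hj)
  have h2 : (((j:ℝ)+1)/2^n) ∈ Set.Icc (0:ℝ) 1 := by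
    have : ((j:ℝ)+1) = ((j+1 : ℕ):ℝ) := by push_cast; ring
    rw [this]; exact dmem hj
  have e1 : ((2^n : ℕ):ℝ)/2^n = 1 := by
    rw [div_eq_one_iff_eq (ne_of_gt (two_pow_pos n))]; push_cast; ring
  rw [e1]
  unfold VQ
  rw [(hM _ h1).2.1, (hM _ h2).2.1, (hM _ h1).2.2.2, (hM _ h2).2.2.2]
  field_simp
  ring

variable (hcol : ∀ n, 1 ≤ n → ∀ j, j < 2^n →
    ∑ i ∈ Finset.range (2^n), posV Q n i j ≤ A/2^n)

include hM hcol in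
lemma negCol {n j : ℕ} (hn : 1 ≤ n) (hj : j < 2^n) :
    ∑ i ∈ Finset.range (2^n), negV Q n i j ≤ (A-1)/2^n := by
  have h1 : ∑ i ∈ Finset.range (2^n), (posV Q n i j - negV Q n i j) = 1/2^n := by
    calc ∑ i ∈ Finset.range (2^n), (posV Q n i j - negV Q n i j)
        = ∑ i ∈ Finset.range (2^n), cV Q n i j :=
          Finset.sum_congr rfl fun i _ => posV_sub_negV Q n i j
      _ = 1/2^n := col_total hM hj
  rw [Finset.sum_sub_distrib] at h1
  have h2 := hcol n hn j hj
  have : (A-1)/2^n = A/2^n - 1/2^n := by ring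
  rw [this]
  linarith

include hM hcol in
lemma S_diff_q {n p q₁ q₂ : ℕ} (hn : 1 ≤ n) (hq : q₁ ≤ q₂) (hq2 : q₂ ≤ 2^n)
    (hp : p ≤ 2^n) :
    S Q n p q₂ - S Q n p q₁ ≤ (A-1) * (((q₂:ℝ)-q₁)/2^n) := by
  have key : S Q n p q₂ - S Q n p q₁
      = ∑ j ∈ Finset.Ico q₁ q₂, ∑ i ∈ Finset.range p, negV Q n i j := by
    unfold S
    rw [Finset.sum_comm (s := Finset.range p), Finset.sum_comm (s := Finset.range p)]
    exact (Finset.sum_Ico_eq_sub _ hq).symm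
  rw [key]
  calc ∑ j ∈ Finset.Ico q₁ q₂, ∑ i ∈ Finset.range p, negV Q n i j
      ≤ ∑ j ∈ Finset.Ico q₁ q₂, ((A-1)/2^n) := by
        apply Finset.sum_le_sum
        intro j hj
        simp only [Finset.mem_Ico] at hj
        calc ∑ i ∈ Finset.range p, negV Q n i j
            ≤ ∑ i ∈ Finset.range (2^n), negV Q n i j := by
              apply Finset.sum_le_sum_of_subset_of_nonneg (Finset.range_subset_range.2 hp)
              intro i _ _; exact negV_nonneg _ _ _ _
          _ ≤ (A-1)/2^n := negCol hM hcol hn (lt_of_lt_of_le hj.2 hq2)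
    _ = ((q₂ - q₁ : ℕ):ℝ) * ((A-1)/2^n) := by
        rw [Finset.sum_const, Nat.card_Ico, nsmul_eq_mul]
    _ = (A-1) * (((q₂:ℝ)-q₁)/2^n) := by
        rw [Nat.cast_sub hq]; ring

end WithHyp

/-! ### the limit function at dyadic points -/

noncomputable def g2 (Q : ℝ → ℝ → ℝ) (m i j k : ℕ) : ℝ :=
  S Q (m+1+k) (i*2^(k+1)) (j*2^(k+1))

noncomputable def fD (Q : ℝ → ℝ → ℝ) (m i j : ℕ) : ℝ := ⨆ k, g2 Q m i j k

lemma g2_mono (Q : ℝ → ℝ → ℝ) (m i j : ℕ) : Monotone (g2 Q m i j) := by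
  apply monotone_nat_of_le_succ
  intro k
  have h := S_refine Q (m+1+k) (i*2^(k+1)) (j*2^(k+1))
  have e1 : 2*(i*2^(k+1)) = i*2^(k+1+1) := by ring
  have e2 : 2*(j*2^(k+1)) = j*2^(k+1+1) := by ring
  rw [e1, e2] at h
  exact h

section WithHyp2

variable {Q : ℝ → ℝ → ℝ} {A : ℝ}
variable (hM : ∀ x ∈ Set.Icc (0:ℝ) 1, Q x 0 = 0 ∧ Q 0 x = 0 ∧ Q x 1 = x ∧ Q 1 x = x)
variable (hA1 : 1 ≤ A)
variable (hrow : ∀ n, 1 ≤ n → ∀ i, i < 2^n →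
    ∑ j ∈ Finset.range (2^n), posV Q n i j ≤ A/2^n)
variable (hcol : ∀ n, 1 ≤ n → ∀ j, j < 2^n →
    ∑ i ∈ Finset.range (2^n), posV Q n i j ≤ A/2^n)

lemma pow_index (m k : ℕ) {i : ℕ} (hi : i ≤ 2^m) : i*2^(k+1) ≤ 2^(m+1+k) := by
  calc i*2^(k+1) ≤ 2^m*2^(k+1) := Nat.mul_le_mul_right _ hi
    _ = 2^(m+1+k) := by rw [← pow_add]; congr 1; omega

include hM hA1 hrow in
lemma g2_bdd {m i j : ℕ} (hi : i ≤ 2^m) (hj : j ≤ 2^m) (k : ℕ) :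
    g2 Q m i j k ≤ A - 1 :=
  S_le hM hA1 hrow (by omega) (pow_index m k hi) (pow_index m k hj)

include hM hA1 hrow in
lemma g2_bddAbove {m i j : ℕ} (hi : i ≤ 2^m) (hj : j ≤ 2^m) :
    BddAbove (Set.range (g2 Q m i j)) := by
  refine ⟨A-1, ?_⟩
  rintro x ⟨k, rfl⟩
  exact g2_bdd hM hA1 hrow hi hj k

include hM hA1 hrow in
lemma g2_le_fD {m i j : ℕ} (hi : i ≤ 2^m) (hj : j ≤ 2^m) (k : ℕ) :
    g2 Q m i j k ≤ fD Q m i j :=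
  le_ciSup (g2_bddAbove hM hA1 hrow hi hj) k

include hM hA1 hrow in
lemma fD_le {m i j : ℕ} (hi : i ≤ 2^m) (hj : j ≤ 2^m) : fD Q m i j ≤ A - 1 :=
  ciSup_le (g2_bdd hM hA1 hrow hi hj)

include hM hA1 hrow in
lemma fD_nonneg {m i j : ℕ} (hi : i ≤ 2^m) (hj : j ≤ 2^m) : 0 ≤ fD Q m i j :=
  le_trans (S_nonneg Q _ _ _) (g2_le_fD hM hA1 hrow hi hj 0)

include hM hA1 hrow in
lemma tendsto_g2 {m i j : ℕ} (hi : i ≤ 2^m) (hj : j ≤ 2^m) :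
    Filter.Tendsto (g2 Q m i j) Filter.atTop (nhds (fD Q m i j)) :=
  tendsto_atTop_ciSup (g2_mono Q m i j) (g2_bddAbove hM hA1 hrow hi hj)

include hM hA1 hrow in
/-- cross-level monotonicity of fD -/
lemma fD_mono {m i j m' i' j' : ℕ} (hi : i ≤ 2^m) (hj : j ≤ 2^m)
    (hii : i'*2^m ≤ i*2^m') (hjj : j'*2^m ≤ j*2^m') :
    fD Q m' i' j' ≤ fD Q m i j := by
  apply ciSup_le
  intro k
  have step1 : g2 Q m' i' j' k ≤ S Q (m'+1+k+m) (i'*2^(k+1)*2^m) (j'*2^(k+1)*2^m) :=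
    S_refine_iter Q (m'+1+k) (i'*2^(k+1)) (j'*2^(k+1)) m
  have hle1 : i'*2^(k+1)*2^m ≤ i*2^(k+m'+1) := by
    calc i'*2^(k+1)*2^m = (i'*2^m)*2^(k+1) := by ring
      _ ≤ (i*2^m')*2^(k+1) := Nat.mul_le_mul_right _ hii
      _ = i*2^(k+m'+1) := by
          rw [mul_assoc, ← pow_add]
          congr 2
          omega
  have hle2 : j'*2^(k+1)*2^m ≤ j*2^(k+m'+1) := by
    calc j'*2^(k+1)*2^m = (j'*2^m)*2^(k+1) := by ring
      _ ≤ (j*2^m')*2^(k+1) := Nat.mul_le_mul_right _ hjj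
      _ = j*2^(k+m'+1) := by
          rw [mul_assoc, ← pow_add]
          congr 2
          omega
  have step2 : S Q (m'+1+k+m) (i'*2^(k+1)*2^m) (j'*2^(k+1)*2^m)
      ≤ S Q (m'+1+k+m) (i*2^(k+m'+1)) (j*2^(k+m'+1)) :=
    le_trans (S_mono_p Q _ hle1 _) (S_mono_q Q _ _ hle2)
  have step3 : S Q (m'+1+k+m) (i*2^(k+m'+1)) (j*2^(k+m'+1)) = g2 Q m i j (k+m') := by
    unfold g2
    have e : m'+1+k+m = m+1+(k+m') := by omega
    rw [e]
  calc g2 Q m' i' j' k ≤ g2 Q m i j (k+m') := by rw [← step3]; exact le_trans step1 step2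
    _ ≤ fD Q m i j := g2_le_fD hM hA1 hrow hi hj (k+m')

include hM hA1 hrow in
lemma fD_eq_of_eq {m i j m' i' j' : ℕ} (hi : i ≤ 2^m) (hj : j ≤ 2^m)
    (hi' : i' ≤ 2^m') (hj' : j' ≤ 2^m')
    (hii : i'*2^m = i*2^m') (hjj : j'*2^m = j*2^m') :
    fD Q m' i' j' = fD Q m i j :=
  le_antisymm (fD_mono hM hA1 hrow hi hj (le_of_eq hii) (le_of_eq hjj))
    (fD_mono hM hA1 hrow hi' hj' (le_of_eq hii.symm) (le_of_eq hjj.symm))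

include hM hA1 hrow in
/-- Lipschitz bound in the first index -/
lemma fD_lip_x {m i i' j : ℕ} (hii : i' ≤ i) (hi : i ≤ 2^m) (hj : j ≤ 2^m) :
    fD Q m i j ≤ fD Q m i' j + (A-1) * (((i:ℝ)-i')/2^m) := by
  apply ciSup_le
  intro k
  have hd := S_diff hM hrow (n := m+1+k) (by omega)
    (Nat.mul_le_mul_right _ hii) (pow_index m k hi) (pow_index m k hj)
  have e : (((i*2^(k+1) : ℕ):ℝ) - ((i'*2^(k+1) : ℕ):ℝ))/2^(m+1+k)
      = ((i:ℝ)-i')/2^m := by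
    push_cast
    rw [pow_add, pow_add]
    field_simp
    ring
  have : g2 Q m i j k ≤ g2 Q m i' j k + (A-1)*(((i:ℝ)-i')/2^m) := by
    unfold g2
    rw [← e]
    linarith [hd]
  calc g2 Q m i j k ≤ g2 Q m i' j k + (A-1)*(((i:ℝ)-i')/2^m) := this
    _ ≤ fD Q m i' j + (A-1)*(((i:ℝ)-i')/2^m) := by
        have := g2_le_fD hM hA1 hrow (le_trans hii hi) hj (m := m) (i := i') (j := j) k
        linarith

include hM hA1 hrow hcol in
/-- Lipschitz bound in the second index -/
lemma fD_lip_y {m i j j' : ℕ} (hjj : j' ≤ j) (hi : i ≤ 2^m) (hj : j ≤ 2^m) :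
    fD Q m i j ≤ fD Q m i j' + (A-1) * (((j:ℝ)-j')/2^m) := by
  apply ciSup_le
  intro k
  have hd := S_diff_q hM hcol (n := m+1+k) (by omega)
    (Nat.mul_le_mul_right _ hjj) (pow_index m k hj) (pow_index m k hi)
  have e : (((j*2^(k+1) : ℕ):ℝ) - ((j'*2^(k+1) : ℕ):ℝ))/2^(m+1+k)
      = ((j:ℝ)-j')/2^m := by
    push_cast
    rw [pow_add, pow_add]
    field_simp
    ring
  have : g2 Q m i j k ≤ g2 Q m i j' k + (A-1)*(((j:ℝ)-j')/2^m) := by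
    unfold g2
    rw [← e]
    linarith [hd]
  calc g2 Q m i j k ≤ g2 Q m i j' k + (A-1)*(((j:ℝ)-j')/2^m) := this
    _ ≤ fD Q m i j' + (A-1)*(((j:ℝ)-j')/2^m) := by
        have := g2_le_fD hM hA1 hrow hi (le_trans hjj hj) (m := m) (i := i) (j := j') k
        linarith


lemma coord_cast (m k i : ℕ) : ((i*2^(k+1) : ℕ):ℝ)/2^(m+1+k) = (i:ℝ)/2^m := by
  push_cast
  rw [pow_add, pow_add]
  field_simp
  ring

include hM hA1 hrow in
/-- 2-increasingness of fD on dyadic rectangles -/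
lemma fD_rect {m i₁ i₂ j₁ j₂ : ℕ} (hi : i₁ ≤ i₂) (hi2 : i₂ ≤ 2^m)
    (hj : j₁ ≤ j₂) (hj2 : j₂ ≤ 2^m) :
    0 ≤ fD Q m i₂ j₂ - fD Q m i₁ j₂ - fD Q m i₂ j₁ + fD Q m i₁ j₁ := by
  have hi1 : i₁ ≤ 2^m := le_trans hi hi2
  have hj1 : j₁ ≤ 2^m := le_trans hj hj2
  have key : ∀ k, 0 ≤ g2 Q m i₂ j₂ k - g2 Q m i₁ j₂ k - g2 Q m i₂ j₁ k + g2 Q m i₁ j₁ k := by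
    intro k
    have hb := block_negV Q (m+1+k) (p₁ := i₁*2^(k+1)) (p₂ := i₂*2^(k+1))
      (q₁ := j₁*2^(k+1)) (q₂ := j₂*2^(k+1))
      (Nat.mul_le_mul_right _ hi) (Nat.mul_le_mul_right _ hj)
    have hpos : 0 ≤ ∑ i ∈ Finset.Ico (i₁*2^(k+1)) (i₂*2^(k+1)),
        ∑ j ∈ Finset.Ico (j₁*2^(k+1)) (j₂*2^(k+1)), negV Q (m+1+k) i j :=
      Finset.sum_nonneg fun _ _ => Finset.sum_nonneg fun _ _ => negV_nonneg _ _ _ _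
    unfold g2
    linarith [hb, hpos]
  have ht₂₂ := tendsto_g2 hM hA1 hrow hi2 hj2
  have ht₁₂ := tendsto_g2 hM hA1 hrow hi1 hj2
  have ht₂₁ := tendsto_g2 hM hA1 hrow hi2 hj1
  have ht₁₁ := tendsto_g2 hM hA1 hrow hi1 hj1
  have := ((ht₂₂.sub ht₁₂).sub ht₂₁).add ht₁₁
  exact ge_of_tendsto' this key

include hM hA1 hrow in
/-- joint 2-increasingness of V_Q + V_N on dyadic rectangles -/
lemma fD_rect_Q {m i₁ i₂ j₁ j₂ : ℕ} (hi : i₁ ≤ i₂) (hi2 : i₂ ≤ 2^m)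
    (hj : j₁ ≤ j₂) (hj2 : j₂ ≤ 2^m) :
    0 ≤ VQ Q ((i₁:ℝ)/2^m) ((j₁:ℝ)/2^m) ((i₂:ℝ)/2^m) ((j₂:ℝ)/2^m)
      + (fD Q m i₂ j₂ - fD Q m i₁ j₂ - fD Q m i₂ j₁ + fD Q m i₁ j₁) := by
  have hi1 : i₁ ≤ 2^m := le_trans hi hi2
  have hj1 : j₁ ≤ 2^m := le_trans hj hj2
  have key : ∀ k, 0 ≤ VQ Q ((i₁:ℝ)/2^m) ((j₁:ℝ)/2^m) ((i₂:ℝ)/2^m) ((j₂:ℝ)/2^m)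
      + (g2 Q m i₂ j₂ k - g2 Q m i₁ j₂ k - g2 Q m i₂ j₁ k + g2 Q m i₁ j₁ k) := by
    intro k
    have hp : i₁*2^(k+1) ≤ i₂*2^(k+1) := Nat.mul_le_mul_right _ hi
    have hq : j₁*2^(k+1) ≤ j₂*2^(k+1) := Nat.mul_le_mul_right _ hj
    have hb := block_negV Q (m+1+k) hp hq
    have hc := block_telescope Q (m+1+k) hp hq
    have hpos : 0 ≤ ∑ i ∈ Finset.Ico (i₁*2^(k+1)) (i₂*2^(k+1)),
        ∑ j ∈ Finset.Ico (j₁*2^(k+1)) (j₂*2^(k+1)), posV Q (m+1+k) i j :=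
      Finset.sum_nonneg fun _ _ => Finset.sum_nonneg fun _ _ => posV_nonneg _ _ _ _
    have hsplit : ∑ i ∈ Finset.Ico (i₁*2^(k+1)) (i₂*2^(k+1)),
        ∑ j ∈ Finset.Ico (j₁*2^(k+1)) (j₂*2^(k+1)), posV Q (m+1+k) i j
        = (∑ i ∈ Finset.Ico (i₁*2^(k+1)) (i₂*2^(k+1)),
            ∑ j ∈ Finset.Ico (j₁*2^(k+1)) (j₂*2^(k+1)), cV Q (m+1+k) i j)
          + ∑ i ∈ Finset.Ico (i₁*2^(k+1)) (i₂*2^(k+1)),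
            ∑ j ∈ Finset.Ico (j₁*2^(k+1)) (j₂*2^(k+1)), negV Q (m+1+k) i j := by
      rw [← Finset.sum_add_distrib]
      apply Finset.sum_congr rfl
      intro i _
      rw [← Finset.sum_add_distrib]
      apply Finset.sum_congr rfl
      intro j _
      have := posV_sub_negV Q (m+1+k) i j
      linarith
    rw [hsplit, hc, hb] at hpos
    have e1 := coord_cast m k i₁
    have e2 := coord_cast m k i₂
    have e3 := coord_cast m k j₁
    have e4 := coord_cast m k j₂
    rw [e1, e2, e3, e4] at hpos
    unfold g2
    linarith [hpos]
  have ht₂₂ := tendsto_g2 hM hA1 hrow hi2 hj2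
  have ht₁₂ := tendsto_g2 hM hA1 hrow hi1 hj2
  have ht₂₁ := tendsto_g2 hM hA1 hrow hi2 hj1
  have ht₁₁ := tendsto_g2 hM hA1 hrow hi1 hj1
  have := Filter.Tendsto.const_add (VQ Q ((i₁:ℝ)/2^m) ((j₁:ℝ)/2^m) ((i₂:ℝ)/2^m) ((j₂:ℝ)/2^m))
    (((ht₂₂.sub ht₁₂).sub ht₂₁).add ht₁₁)
  exact ge_of_tendsto' this key

end WithHyp2

/-! ### the limit function on the square -/

def ES (Q : ℝ → ℝ → ℝ) (x y : ℝ) : Set ℝ :=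
  {r | ∃ m i j : ℕ, i ≤ 2^m ∧ j ≤ 2^m ∧ (i:ℝ)/2^m ≤ x ∧ (j:ℝ)/2^m ≤ y ∧ r = fD Q m i j}

noncomputable def NN (Q : ℝ → ℝ → ℝ) (x y : ℝ) : ℝ := sSup (ES Q x y)

lemma fD_zero_left (Q : ℝ → ℝ → ℝ) (m j : ℕ) : fD Q m 0 j = 0 := by
  have h : ∀ k, g2 Q m 0 j k = 0 := by
    intro k
    unfold g2
    simp [S]
  unfold fD
  simp only [h]
  exact ciSup_const

lemma fD_zero_right (Q : ℝ → ℝ → ℝ) (m i : ℕ) : fD Q m i 0 = 0 := by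
  have h : ∀ k, g2 Q m i 0 k = 0 := by
    intro k
    unfold g2
    simp [S]
  unfold fD
  simp only [h]
  exact ciSup_const

section WithHyp3

variable {Q : ℝ → ℝ → ℝ} {A : ℝ}
variable (hM : ∀ x ∈ Set.Icc (0:ℝ) 1, Q x 0 = 0 ∧ Q 0 x = 0 ∧ Q x 1 = x ∧ Q 1 x = x)
variable (hA1 : 1 ≤ A)
variable (hrow : ∀ n, 1 ≤ n → ∀ i, i < 2^n →
    ∑ j ∈ Finset.range (2^n), posV Q n i j ≤ A/2^n)
variable (hcol : ∀ n, 1 ≤ n → ∀ j, j < 2^n →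
    ∑ i ∈ Finset.range (2^n), posV Q n i j ≤ A/2^n)

include hM hA1 hrow in
lemma ES_bddAbove (x y : ℝ) : BddAbove (ES Q x y) := by
  refine ⟨A-1, ?_⟩
  rintro r ⟨m, i, j, hi, hj, _, _, rfl⟩
  exact fD_le hM hA1 hrow hi hj

lemma zero_mem_ES {x y : ℝ} (hx : 0 ≤ x) (hy : 0 ≤ y) : (0:ℝ) ∈ ES Q x y := by
  refine ⟨0, 0, 0, Nat.zero_le _, Nat.zero_le _, by simpa using hx, by simpa using hy,
    (fD_zero_left Q 0 0).symm⟩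

include hM hA1 hrow in
lemma NN_nonneg {x y : ℝ} (hx : 0 ≤ x) (hy : 0 ≤ y) : 0 ≤ NN Q x y :=
  le_csSup (ES_bddAbove hM hA1 hrow x y) (zero_mem_ES hx hy)

include hM hA1 hrow in
lemma NN_le_A {x y : ℝ} (hx : 0 ≤ x) (hy : 0 ≤ y) : NN Q x y ≤ A - 1 := by
  apply csSup_le ⟨0, zero_mem_ES hx hy⟩
  rintro r ⟨m, i, j, hi, hj, _, _, rfl⟩
  exact fD_le hM hA1 hrow hi hj

include hM hA1 hrow in
lemma NN_mono {x y x' y' : ℝ} (hx : 0 ≤ x) (hy : 0 ≤ y) (hxx : x ≤ x') (hyy : y ≤ y') :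
    NN Q x y ≤ NN Q x' y' := by
  apply csSup_le_csSup (ES_bddAbove hM hA1 hrow x' y') ⟨0, zero_mem_ES hx hy⟩
  rintro r ⟨m, i, j, hi, hj, h1, h2, rfl⟩
  exact ⟨m, i, j, hi, hj, le_trans h1 hxx, le_trans h2 hyy, rfl⟩

lemma nat_ineq_of_coord {m i m' i' : ℕ} (h : (i':ℝ)/2^m' ≤ (i:ℝ)/2^m) :
    i'*2^m ≤ i*2^m' := by
  have h2 := (div_le_div_iff₀ (two_pow_pos m') (two_pow_pos m)).1 h
  have : ((i'*2^m : ℕ):ℝ) ≤ ((i*2^m' : ℕ):ℝ) := by push_cast; linarith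
  exact_mod_cast this

include hM hA1 hrow in
lemma NN_dyadic {m i j : ℕ} (hi : i ≤ 2^m) (hj : j ≤ 2^m) :
    NN Q ((i:ℝ)/2^m) ((j:ℝ)/2^m) = fD Q m i j := by
  apply le_antisymm
  · apply csSup_le ⟨0, zero_mem_ES (by positivity) (by positivity)⟩
    rintro r ⟨m', i', j', hi', hj', h1, h2, rfl⟩
    exact fD_mono hM hA1 hrow hi hj (nat_ineq_of_coord h1) (nat_ineq_of_coord h2)
  · exact le_csSup (ES_bddAbove hM hA1 hrow _ _)
      ⟨m, i, j, hi, hj, le_refl _, le_refl _, rfl⟩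

include hM hA1 hrow in
lemma NN_y0 {x : ℝ} (hx : 0 ≤ x) : NN Q x 0 = 0 := by
  apply le_antisymm
  · apply csSup_le ⟨0, zero_mem_ES hx (le_refl _)⟩
    rintro r ⟨m, i, j, hi, hj, _, h2, rfl⟩
    have h0 : (0:ℝ) ≤ (j:ℝ)/2^m := by positivity
    have hj0 : j = 0 := by
      have heq : (j:ℝ)/2^m = 0 := le_antisymm h2 h0
      have h2m := two_pow_pos m
      rw [div_eq_zero_iff] at heq
      rcases heq with h | h
      · exact_mod_cast h
      · exact absurd h (ne_of_gt h2m)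
    rw [hj0, fD_zero_right]
  · exact NN_nonneg hM hA1 hrow hx (le_refl _)

include hM hA1 hrow in
lemma NN_x0 {y : ℝ} (hy : 0 ≤ y) : NN Q 0 y = 0 := by
  apply le_antisymm
  · apply csSup_le ⟨0, zero_mem_ES (le_refl _) hy⟩
    rintro r ⟨m, i, j, hi, hj, h1, _, rfl⟩
    have h0 : (0:ℝ) ≤ (i:ℝ)/2^m := by positivity
    have hi0 : i = 0 := by
      have heq : (i:ℝ)/2^m = 0 := le_antisymm h1 h0
      have h2m := two_pow_pos m
      rw [div_eq_zero_iff] at heq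
      rcases heq with h | h
      · exact_mod_cast h
      · exact absurd h (ne_of_gt h2m)
    rw [hi0, fD_zero_left]
  · exact NN_nonneg hM hA1 hrow (le_refl _) hy

lemma coord_shift (m t i : ℕ) : ((i*2^t : ℕ):ℝ)/2^(m+t) = (i:ℝ)/2^m := by
  push_cast
  rw [pow_add]
  field_simp

lemma exists_small_pow {c ε : ℝ} (hc : 0 ≤ c) (hε : 0 < ε) :
    ∃ t : ℕ, c/2^t < ε := by
  obtain ⟨t, ht⟩ := exists_nat_gt (c/ε)
  refine ⟨t, ?_⟩
  have h2 : ((t:ℝ)) < 2^t := by exact_mod_cast Nat.lt_two_pow_self (n := t)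
  have h3 : c/ε < 2^t := lt_trans ht h2
  have h4 : c < 2^t * ε := by
    rw [div_lt_iff₀ hε] at h3
    linarith
  rw [div_lt_iff₀ (two_pow_pos t)]
  linarith

include hM hA1 hrow in
lemma NN_lip_x {x₁ x₂ y : ℝ} (hx1 : 0 ≤ x₁) (h12 : x₁ ≤ x₂) (hx2 : x₂ ≤ 1) (hy : 0 ≤ y) :
    NN Q x₂ y ≤ NN Q x₁ y + (A-1)*(x₂-x₁) := by
  have hA0 : (0:ℝ) ≤ A - 1 := by linarith
  apply le_of_forall_pos_le_add
  intro ε hε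
  apply csSup_le ⟨0, zero_mem_ES (le_trans hx1 h12) hy⟩
  rintro r ⟨m, i, j, hi, hj, hxx, hyy, rfl⟩
  obtain ⟨t, ht⟩ := exists_small_pow (by linarith : (0:ℝ) ≤ A-1) hε
  have hIle : i*2^t ≤ 2^(m+t) := by
    rw [pow_add]
    exact Nat.mul_le_mul_right _ hi
  have hJle : j*2^t ≤ 2^(m+t) := by
    rw [pow_add]
    exact Nat.mul_le_mul_right _ hj
  have hfd : fD Q (m+t) (i*2^t) (j*2^t) = fD Q m i j :=
    fD_eq_of_eq hM hA1 hrow hi hj hIle hJle (by rw [pow_add]; ring) (by rw [pow_add]; ring)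
  set L := m + t with hL
  set I := i*2^t with hI
  set J := j*2^t with hJ
  have h2L : (0:ℝ) < 2^L := two_pow_pos L
  set i' := min (Nat.floor (x₁ * (2:ℝ)^L)) I with hi'def
  have hi'I : i' ≤ I := min_le_right _ _
  have hc1 : (i':ℝ)/2^L ≤ x₁ := by
    rw [div_le_iff₀ h2L]
    calc (i':ℝ) ≤ (Nat.floor (x₁ * (2:ℝ)^L) : ℝ) := Nat.cast_le.2 (min_le_left _ _)
      _ ≤ x₁*(2:ℝ)^L := Nat.floor_le (mul_nonneg hx1 (le_of_lt h2L))
  have hIx : (I:ℝ) ≤ x₂*2^L := by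
    have hcoord : ((I:ℕ):ℝ)/2^L = (i:ℝ)/2^m := coord_shift m t i
    have : ((I:ℕ):ℝ)/2^L ≤ x₂ := by rw [hcoord]; exact hxx
    rw [div_le_iff₀ h2L] at this
    linarith
  have hc3 : (I:ℝ) - i' ≤ (x₂-x₁)*2^L + 1 := by
    rcases le_total (Nat.floor (x₁ * (2:ℝ)^L)) I with hcase | hcase
    · have he : i' = Nat.floor (x₁ * (2:ℝ)^L) := min_eq_left hcase
      have hfl : x₁*(2:ℝ)^L < (Nat.floor (x₁ * (2:ℝ)^L) : ℝ) + 1 := Nat.lt_floor_add_one _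
      rw [he]
      nlinarith
    · have he : i' = I := min_eq_right hcase
      have : (0:ℝ) ≤ (x₂-x₁)*2^L := mul_nonneg (by linarith) (le_of_lt h2L)
      rw [he]
      linarith
  have hlip := fD_lip_x hM hA1 hrow hi'I hIle hJle
  have hmem : fD Q L i' J ≤ NN Q x₁ y := by
    apply le_csSup (ES_bddAbove hM hA1 hrow x₁ y)
    refine ⟨L, i', J, le_trans hi'I hIle, hJle, hc1, ?_, rfl⟩
    rw [coord_shift m t j]
    exact hyy
  have hdiv : ((I:ℝ)-i')/2^L ≤ (x₂-x₁) + 1/2^L := by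
    rw [div_le_iff₀ h2L]
    have : ((x₂-x₁) + 1/2^L)*2^L = (x₂-x₁)*2^L + 1 := by field_simp
    rw [this]
    exact hc3
  have hbound : (A-1)*(((I:ℝ)-i')/2^L) ≤ (A-1)*(x₂-x₁) + (A-1)/2^L := by
    calc (A-1)*(((I:ℝ)-i')/2^L) ≤ (A-1)*((x₂-x₁)+1/2^L) :=
          mul_le_mul_of_nonneg_left hdiv hA0
      _ = (A-1)*(x₂-x₁) + (A-1)/2^L := by ring
  have hpow2 : (2:ℝ)^t ≤ 2^L := by
    apply pow_le_pow_right₀ one_le_two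
    omega
  have hLt : (A-1)/2^L ≤ (A-1)/2^t := by
    rw [div_le_div_iff₀ h2L (two_pow_pos t)]
    nlinarith
  rw [← hfd]
  calc fD Q L I J ≤ fD Q L i' J + (A-1)*(((I:ℝ)-i')/2^L) := hlip
    _ ≤ NN Q x₁ y + ((A-1)*(x₂-x₁) + (A-1)/2^L) := by linarith
    _ ≤ NN Q x₁ y + (A-1)*(x₂-x₁) + ε := by
        have := le_trans hLt (le_of_lt ht)
        linarith

include hM hA1 hrow hcol in
lemma NN_lip_y {x y₁ y₂ : ℝ} (hy1 : 0 ≤ y₁) (h12 : y₁ ≤ y₂) (hy2 : y₂ ≤ 1) (hx : 0 ≤ x) :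
    NN Q x y₂ ≤ NN Q x y₁ + (A-1)*(y₂-y₁) := by
  have hA0 : (0:ℝ) ≤ A - 1 := by linarith
  apply le_of_forall_pos_le_add
  intro ε hε
  apply csSup_le ⟨0, zero_mem_ES hx (le_trans hy1 h12)⟩
  rintro r ⟨m, i, j, hi, hj, hxx, hyy, rfl⟩
  obtain ⟨t, ht⟩ := exists_small_pow (by linarith : (0:ℝ) ≤ A-1) hε
  have hIle : i*2^t ≤ 2^(m+t) := by
    rw [pow_add]
    exact Nat.mul_le_mul_right _ hi
  have hJle : j*2^t ≤ 2^(m+t) := by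
    rw [pow_add]
    exact Nat.mul_le_mul_right _ hj
  have hfd : fD Q (m+t) (i*2^t) (j*2^t) = fD Q m i j :=
    fD_eq_of_eq hM hA1 hrow hi hj hIle hJle (by rw [pow_add]; ring) (by rw [pow_add]; ring)
  set L := m + t with hL
  set I := i*2^t with hI
  set J := j*2^t with hJ
  have h2L : (0:ℝ) < 2^L := two_pow_pos L
  set j' := min (Nat.floor (y₁ * (2:ℝ)^L)) J with hj'def
  have hj'J : j' ≤ J := min_le_right _ _
  have hc1 : (j':ℝ)/2^L ≤ y₁ := by
    rw [div_le_iff₀ h2L]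
    calc (j':ℝ) ≤ (Nat.floor (y₁ * (2:ℝ)^L) : ℝ) := Nat.cast_le.2 (min_le_left _ _)
      _ ≤ y₁*(2:ℝ)^L := Nat.floor_le (mul_nonneg hy1 (le_of_lt h2L))
  have hJy : (J:ℝ) ≤ y₂*2^L := by
    have hcoord : ((J:ℕ):ℝ)/2^L = (j:ℝ)/2^m := coord_shift m t j
    have : ((J:ℕ):ℝ)/2^L ≤ y₂ := by rw [hcoord]; exact hyy
    rw [div_le_iff₀ h2L] at this
    linarith
  have hc3 : (J:ℝ) - j' ≤ (y₂-y₁)*2^L + 1 := by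
    rcases le_total (Nat.floor (y₁ * (2:ℝ)^L)) J with hcase | hcase
    · have he : j' = Nat.floor (y₁ * (2:ℝ)^L) := min_eq_left hcase
      have hfl : y₁*(2:ℝ)^L < (Nat.floor (y₁ * (2:ℝ)^L) : ℝ) + 1 := Nat.lt_floor_add_one _
      rw [he]
      nlinarith
    · have he : j' = J := min_eq_right hcase
      have : (0:ℝ) ≤ (y₂-y₁)*2^L := mul_nonneg (by linarith) (le_of_lt h2L)
      rw [he]
      linarith
  have hlip := fD_lip_y hM hA1 hrow hcol hj'J hIle hJle
  have hmem : fD Q L I j' ≤ NN Q x y₁ := by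
    apply le_csSup (ES_bddAbove hM hA1 hrow x y₁)
    refine ⟨L, I, j', hIle, le_trans hj'J hJle, ?_, hc1, rfl⟩
    rw [coord_shift m t i]
    exact hxx
  have hdiv : ((J:ℝ)-j')/2^L ≤ (y₂-y₁) + 1/2^L := by
    rw [div_le_iff₀ h2L]
    have : ((y₂-y₁) + 1/2^L)*2^L = (y₂-y₁)*2^L + 1 := by field_simp
    rw [this]
    exact hc3
  have hbound : (A-1)*(((J:ℝ)-j')/2^L) ≤ (A-1)*(y₂-y₁) + (A-1)/2^L := by
    calc (A-1)*(((J:ℝ)-j')/2^L) ≤ (A-1)*((y₂-y₁)+1/2^L) :=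
          mul_le_mul_of_nonneg_left hdiv hA0
      _ = (A-1)*(y₂-y₁) + (A-1)/2^L := by ring
  have hpow2 : (2:ℝ)^t ≤ 2^L := by
    apply pow_le_pow_right₀ one_le_two
    omega
  have hLt : (A-1)/2^L ≤ (A-1)/2^t := by
    rw [div_le_div_iff₀ h2L (two_pow_pos t)]
    nlinarith
  rw [← hfd]
  calc fD Q L I J ≤ fD Q L I j' + (A-1)*(((J:ℝ)-j')/2^L) := hlip
    _ ≤ NN Q x y₁ + ((A-1)*(y₂-y₁) + (A-1)/2^L) := by linarith
    _ ≤ NN Q x y₁ + (A-1)*(y₂-y₁) + ε := by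
        have := le_trans hLt (le_of_lt ht)
        linarith


include hM hA1 hrow hcol in
/-- one-corner upper perturbation bound for NN -/
lemma NN_corner {a b x y : ℝ} (ha : 0 ≤ a) (hax : a ≤ x) (hx : x ≤ 1)
    (hb : 0 ≤ b) (hby : b ≤ y) (hy : y ≤ 1) :
    NN Q a b ≤ NN Q x y ∧ NN Q x y ≤ NN Q a b + (A-1)*((x-a)+(y-b)) := by
  constructor
  · exact NN_mono hM hA1 hrow ha hb hax hby
  · have h1 : NN Q x y ≤ NN Q a y + (A-1)*(x-a) :=
      NN_lip_x hM hA1 hrow ha hax hx (le_trans hb hby)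
    have h2 : NN Q a y ≤ NN Q a b + (A-1)*(y-b) :=
      NN_lip_y hM hA1 hrow hcol hb hby hy ha
    linarith

variable (hL : ∀ x₁ ∈ Set.Icc (0:ℝ) 1, ∀ x₂ ∈ Set.Icc (0:ℝ) 1, ∀ y₁ ∈ Set.Icc (0:ℝ) 1,
    ∀ y₂ ∈ Set.Icc (0:ℝ) 1, |Q x₂ y₂ - Q x₁ y₁| ≤ |x₂-x₁| + |y₂-y₁|)

include hL in
lemma Q_corner {a b x y : ℝ} (ha : 0 ≤ a) (hax : a ≤ x) (hx : x ≤ 1)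
    (hb : 0 ≤ b) (hby : b ≤ y) (hy : y ≤ 1) :
    Q a b - ((x-a)+(y-b)) ≤ Q x y ∧ Q x y ≤ Q a b + ((x-a)+(y-b)) := by
  have hmem1 : a ∈ Set.Icc (0:ℝ) 1 := ⟨ha, le_trans hax hx⟩
  have hmem2 : x ∈ Set.Icc (0:ℝ) 1 := ⟨le_trans ha hax, hx⟩
  have hmem3 : b ∈ Set.Icc (0:ℝ) 1 := ⟨hb, le_trans hby hy⟩
  have hmem4 : y ∈ Set.Icc (0:ℝ) 1 := ⟨le_trans hb hby, hy⟩
  have h := hL a hmem1 x hmem2 b hmem3 y hmem4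
  rw [abs_of_nonneg (by linarith : (0:ℝ) ≤ x-a), abs_of_nonneg (by linarith : (0:ℝ) ≤ y-b)] at h
  have h2 := abs_le.1 h
  constructor <;> linarith [h2.1, h2.2]

/-- floor data for one coordinate -/
lemma floor_data {x : ℝ} (M : ℕ) (hx0 : 0 ≤ x) (hx1 : x ≤ 1) :
    Nat.floor (x*(2:ℝ)^M) ≤ 2^M ∧ ((Nat.floor (x*(2:ℝ)^M) : ℝ)/2^M ≤ x)
      ∧ x ≤ (Nat.floor (x*(2:ℝ)^M) : ℝ)/2^M + 1/2^M := by
  have h2M : (0:ℝ) < 2^M := two_pow_pos M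
  refine ⟨?_, ?_, ?_⟩
  · have h1 : x*(2:ℝ)^M ≤ ((2^M : ℕ):ℝ) := by
      push_cast
      nlinarith
    calc Nat.floor (x*(2:ℝ)^M) ≤ Nat.floor (((2^M : ℕ):ℝ)) := Nat.floor_mono h1
      _ = 2^M := Nat.floor_natCast _
  · rw [div_le_iff₀ h2M]
    exact Nat.floor_le (mul_nonneg hx0 (le_of_lt h2M))
  · have h1 : x*(2:ℝ)^M < (Nat.floor (x*(2:ℝ)^M) : ℝ) + 1 := Nat.lt_floor_add_one _
    rw [← add_div, le_div_iff₀ h2M]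
    linarith

include hM hA1 hrow hcol in
lemma NN_rect {x₁ x₂ y₁ y₂ : ℝ} (hx1 : 0 ≤ x₁) (hx : x₁ ≤ x₂) (hx2 : x₂ ≤ 1)
    (hy1 : 0 ≤ y₁) (hy : y₁ ≤ y₂) (hy2 : y₂ ≤ 1) :
    0 ≤ NN Q x₂ y₂ - NN Q x₁ y₂ - NN Q x₂ y₁ + NN Q x₁ y₁ := by
  have hA0 : (0:ℝ) ≤ A-1 := by linarith
  apply le_of_forall_pos_le_add
  intro ε hε
  obtain ⟨M, hMε⟩ := exists_small_pow (c := 4*(A-1)) (by linarith) hε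
  have h2M := two_pow_pos M
  obtain ⟨hn1le, ha1x, hxa1⟩ := floor_data M hx1 (le_trans hx hx2)
  obtain ⟨hn2le, ha2x, hxa2⟩ := floor_data M (le_trans hx1 hx) hx2
  obtain ⟨hk1le, hb1y, hyb1⟩ := floor_data M hy1 (le_trans hy hy2)
  obtain ⟨hk2le, hb2y, hyb2⟩ := floor_data M (le_trans hy1 hy) hy2
  set n₁ := Nat.floor (x₁*(2:ℝ)^M) with hn₁d
  set n₂ := Nat.floor (x₂*(2:ℝ)^M) with hn₂d
  set k₁ := Nat.floor (y₁*(2:ℝ)^M) with hk₁d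
  set k₂ := Nat.floor (y₂*(2:ℝ)^M) with hk₂d
  have hmonon : n₁ ≤ n₂ := Nat.floor_mono (by nlinarith)
  have hmonok : k₁ ≤ k₂ := Nat.floor_mono (by nlinarith)
  have hdy := fD_rect hM hA1 hrow hmonon hn2le hmonok hk2le
  rw [← NN_dyadic hM hA1 hrow hn2le hk2le, ← NN_dyadic hM hA1 hrow hn1le hk2le,
    ← NN_dyadic hM hA1 hrow hn2le hk1le, ← NN_dyadic hM hA1 hrow hn1le hk1le] at hdy
  set a₁ := (n₁:ℝ)/2^M with ha₁d
  set a₂ := (n₂:ℝ)/2^M with ha₂d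
  set b₁ := (k₁:ℝ)/2^M with hb₁d
  set b₂ := (k₂:ℝ)/2^M with hb₂d
  have ha₁0 : (0:ℝ) ≤ a₁ := by positivity
  have ha₂0 : (0:ℝ) ≤ a₂ := by positivity
  have hb₁0 : (0:ℝ) ≤ b₁ := by positivity
  have hb₂0 : (0:ℝ) ≤ b₂ := by positivity
  clear_value a₁ a₂ b₁ b₂
  have hdd : (2:ℝ)/2^M = 1/2^M + 1/2^M := by ring
  have hdd8 : (8:ℝ)/2^M = 8*(1/2^M) := by ring
  have hc22 := NN_corner hM hA1 hrow hcol ha₂0 ha2x hx2 hb₂0 hb2y hy2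
  have hc12 := NN_corner hM hA1 hrow hcol ha₁0 ha1x (le_trans hx hx2) hb₂0 hb2y hy2
  have hc21 := NN_corner hM hA1 hrow hcol ha₂0 ha2x hx2 hb₁0 hb1y (le_trans hy hy2)
  have hc11 := NN_corner hM hA1 hrow hcol ha₁0 ha1x (le_trans hx hx2) hb₁0 hb1y (le_trans hy hy2)
  have hs12 : (A-1)*((x₁-a₁)+(y₂-b₂)) ≤ (A-1)*(2/2^M) :=
    mul_le_mul_of_nonneg_left (by linarith) hA0
  have hs21 : (A-1)*((x₂-a₂)+(y₁-b₁)) ≤ (A-1)*(2/2^M) :=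
    mul_le_mul_of_nonneg_left (by linarith) hA0
  have heq : (A-1)*(2/2^M) + (A-1)*(2/2^M) = 4*(A-1)/2^M := by ring
  linarith [hdy, hc22.1, hc12.2, hc21.2, hc11.1, hs12, hs21]

include hM hA1 hrow hcol hL in
lemma NN_rect_Q {x₁ x₂ y₁ y₂ : ℝ} (hx1 : 0 ≤ x₁) (hx : x₁ ≤ x₂) (hx2 : x₂ ≤ 1)
    (hy1 : 0 ≤ y₁) (hy : y₁ ≤ y₂) (hy2 : y₂ ≤ 1) :
    0 ≤ (Q x₂ y₂ - Q x₁ y₂ - Q x₂ y₁ + Q x₁ y₁)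
      + (NN Q x₂ y₂ - NN Q x₁ y₂ - NN Q x₂ y₁ + NN Q x₁ y₁) := by
  have hA0 : (0:ℝ) ≤ A-1 := by linarith
  apply le_of_forall_pos_le_add
  intro ε hε
  obtain ⟨M, hMε⟩ := exists_small_pow (c := 4*(A-1)+8) (by linarith) hε
  have h2M := two_pow_pos M
  obtain ⟨hn1le, ha1x, hxa1⟩ := floor_data M hx1 (le_trans hx hx2)
  obtain ⟨hn2le, ha2x, hxa2⟩ := floor_data M (le_trans hx1 hx) hx2
  obtain ⟨hk1le, hb1y, hyb1⟩ := floor_data M hy1 (le_trans hy hy2)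
  obtain ⟨hk2le, hb2y, hyb2⟩ := floor_data M (le_trans hy1 hy) hy2
  set n₁ := Nat.floor (x₁*(2:ℝ)^M) with hn₁d
  set n₂ := Nat.floor (x₂*(2:ℝ)^M) with hn₂d
  set k₁ := Nat.floor (y₁*(2:ℝ)^M) with hk₁d
  set k₂ := Nat.floor (y₂*(2:ℝ)^M) with hk₂d
  have hmonon : n₁ ≤ n₂ := Nat.floor_mono (by nlinarith)
  have hmonok : k₁ ≤ k₂ := Nat.floor_mono (by nlinarith)
  have hdy := fD_rect_Q hM hA1 hrow hmonon hn2le hmonok hk2le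
  rw [← NN_dyadic hM hA1 hrow hn2le hk2le, ← NN_dyadic hM hA1 hrow hn1le hk2le,
    ← NN_dyadic hM hA1 hrow hn2le hk1le, ← NN_dyadic hM hA1 hrow hn1le hk1le] at hdy
  unfold VQ at hdy
  set a₁ := (n₁:ℝ)/2^M with ha₁d
  set a₂ := (n₂:ℝ)/2^M with ha₂d
  set b₁ := (k₁:ℝ)/2^M with hb₁d
  set b₂ := (k₂:ℝ)/2^M with hb₂d
  have ha₁0 : (0:ℝ) ≤ a₁ := by positivity
  have ha₂0 : (0:ℝ) ≤ a₂ := by positivity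
  have hb₁0 : (0:ℝ) ≤ b₁ := by positivity
  have hb₂0 : (0:ℝ) ≤ b₂ := by positivity
  clear_value a₁ a₂ b₁ b₂
  have hdd : (2:ℝ)/2^M = 1/2^M + 1/2^M := by ring
  have hdd8 : (8:ℝ)/2^M = 8*(1/2^M) := by ring
  have hc22 := NN_corner hM hA1 hrow hcol ha₂0 ha2x hx2 hb₂0 hb2y hy2
  have hc12 := NN_corner hM hA1 hrow hcol ha₁0 ha1x (le_trans hx hx2) hb₂0 hb2y hy2
  have hc21 := NN_corner hM hA1 hrow hcol ha₂0 ha2x hx2 hb₁0 hb1y (le_trans hy hy2)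
  have hc11 := NN_corner hM hA1 hrow hcol ha₁0 ha1x (le_trans hx hx2) hb₁0 hb1y (le_trans hy hy2)
  have hq22 := Q_corner hL ha₂0 ha2x hx2 hb₂0 hb2y hy2
  have hq12 := Q_corner hL ha₁0 ha1x (le_trans hx hx2) hb₂0 hb2y hy2
  have hq21 := Q_corner hL ha₂0 ha2x hx2 hb₁0 hb1y (le_trans hy hy2)
  have hq11 := Q_corner hL ha₁0 ha1x (le_trans hx hx2) hb₁0 hb1y (le_trans hy hy2)
  have hs12 : (A-1)*((x₁-a₁)+(y₂-b₂)) ≤ (A-1)*(2/2^M) :=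
    mul_le_mul_of_nonneg_left (by linarith) hA0
  have hs21 : (A-1)*((x₂-a₂)+(y₁-b₁)) ≤ (A-1)*(2/2^M) :=
    mul_le_mul_of_nonneg_left (by linarith) hA0
  have heq : (A-1)*(2/2^M) + (A-1)*(2/2^M) + 8/2^M = (4*(A-1)+8)/2^M := by ring
  linarith [hdy, hc22.1, hc12.2, hc21.2, hc11.1, hs12, hs21,
    hq22.1, hq12.2, hq21.2, hq11.1]

end WithHyp3



/-! ### the two copulas -/

noncomputable def Dfun (Q : ℝ → ℝ → ℝ) (A : ℝ) : ℝ → ℝ → ℝ := fun x y =>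
  (NN Q x y + (A*x - NN Q x 1)*(A*y - NN Q 1 y)/(A - NN Q 1 1))/A

noncomputable def Cfun (Q : ℝ → ℝ → ℝ) (A : ℝ) : ℝ → ℝ → ℝ := fun x y =>
  (Q x y + A * Dfun Q A x y)/(A+1)

section Main

variable {Q : ℝ → ℝ → ℝ} {A : ℝ}
variable (hM : ∀ x ∈ Set.Icc (0:ℝ) 1, Q x 0 = 0 ∧ Q 0 x = 0 ∧ Q x 1 = x ∧ Q 1 x = x)
variable (hA1 : 1 ≤ A)
variable (hrow : ∀ n, 1 ≤ n → ∀ i, i < 2^n →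
    ∑ j ∈ Finset.range (2^n), posV Q n i j ≤ A/2^n)
variable (hcol : ∀ n, 1 ≤ n → ∀ j, j < 2^n →
    ∑ i ∈ Finset.range (2^n), posV Q n i j ≤ A/2^n)
variable (hL : ∀ x₁ ∈ Set.Icc (0:ℝ) 1, ∀ x₂ ∈ Set.Icc (0:ℝ) 1, ∀ y₁ ∈ Set.Icc (0:ℝ) 1,
    ∀ y₂ ∈ Set.Icc (0:ℝ) 1, |Q x₂ y₂ - Q x₁ y₁| ≤ |x₂-x₁| + |y₂-y₁|)

include hM hA1 hrow in
lemma mass_ge : 1 ≤ A - NN Q 1 1 := by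
  have h := NN_le_A hM hA1 hrow (zero_le_one) (zero_le_one)
  linarith

include hM hA1 hrow hcol in
lemma rx_incr {x₁ x₂ : ℝ} (h1 : 0 ≤ x₁) (h : x₁ ≤ x₂) (h2 : x₂ ≤ 1) :
    x₂ - x₁ ≤ (A*x₂ - NN Q x₂ 1) - (A*x₁ - NN Q x₁ 1) := by
  have := NN_lip_x hM hA1 hrow h1 h h2 (zero_le_one : (0:ℝ) ≤ 1)
  linarith

include hM hA1 hrow hcol in
lemma ry_incr {y₁ y₂ : ℝ} (h1 : 0 ≤ y₁) (h : y₁ ≤ y₂) (h2 : y₂ ≤ 1) :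
    y₂ - y₁ ≤ (A*y₂ - NN Q 1 y₂) - (A*y₁ - NN Q 1 y₁) := by
  have := NN_lip_y hM hA1 hrow hcol h1 h h2 (zero_le_one : (0:ℝ) ≤ 1)
  linarith

include hM hA1 hrow hcol in
lemma rx_nonneg {x : ℝ} (h1 : 0 ≤ x) (h2 : x ≤ 1) : 0 ≤ A*x - NN Q x 1 := by
  have h := rx_incr hM hA1 hrow hcol (le_refl (0:ℝ)) h1 h2
  have h0 : NN Q 0 1 = 0 := NN_x0 hM hA1 hrow zero_le_one
  rw [h0] at h
  linarith

include hM hA1 hrow hcol in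
lemma ry_nonneg {y : ℝ} (h1 : 0 ≤ y) (h2 : y ≤ 1) : 0 ≤ A*y - NN Q 1 y := by
  have h := ry_incr hM hA1 hrow hcol (le_refl (0:ℝ)) h1 h2
  have h0 : NN Q 1 0 = 0 := NN_y0 hM hA1 hrow zero_le_one
  rw [h0] at h
  linarith

include hM hA1 hrow in
lemma Dfun_x0 {x : ℝ} (h1 : 0 ≤ x) : Dfun Q A x 0 = 0 := by
  unfold Dfun
  rw [NN_y0 hM hA1 hrow h1, NN_y0 hM hA1 hrow zero_le_one]
  ring

include hM hA1 hrow in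
lemma Dfun_0y {y : ℝ} (h1 : 0 ≤ y) : Dfun Q A 0 y = 0 := by
  unfold Dfun
  rw [NN_x0 hM hA1 hrow h1, NN_x0 hM hA1 hrow zero_le_one]
  ring

include hM hA1 hrow in
lemma Dfun_margin_x1 {x : ℝ} : Dfun Q A x 1 = x := by
  unfold Dfun
  have hmne : A - NN Q 1 1 ≠ 0 := by
    have := mass_ge hM hA1 hrow
    linarith
  have hAne : A ≠ 0 := by linarith
  have e : A*1 - NN Q 1 1 = A - NN Q 1 1 := by ring
  rw [e, mul_div_assoc, div_self hmne, mul_one]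
  field_simp
  ring

include hM hA1 hrow in
lemma Dfun_margin_1y {y : ℝ} : Dfun Q A 1 y = y := by
  unfold Dfun
  have hmne : A - NN Q 1 1 ≠ 0 := by
    have := mass_ge hM hA1 hrow
    linarith
  have hAne : A ≠ 0 := by linarith
  have e : A*1 - NN Q 1 1 = A - NN Q 1 1 := by ring
  rw [e, mul_comm (A - NN Q 1 1) (A*y - NN Q 1 y), mul_div_assoc, div_self hmne, mul_one]
  field_simp
  ring

include hM hA1 hrow hcol in
lemma Dfun_rect {x₁ x₂ y₁ y₂ : ℝ} (hx1 : 0 ≤ x₁) (hx : x₁ ≤ x₂) (hx2 : x₂ ≤ 1)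
    (hy1 : 0 ≤ y₁) (hy : y₁ ≤ y₂) (hy2 : y₂ ≤ 1) :
    0 ≤ Dfun Q A x₂ y₂ - Dfun Q A x₁ y₂ - Dfun Q A x₂ y₁ + Dfun Q A x₁ y₁ := by
  have hmne : A - NN Q 1 1 ≠ 0 := by
    have := mass_ge hM hA1 hrow
    linarith
  have hm0 : (0:ℝ) ≤ A - NN Q 1 1 := by
    have := mass_ge hM hA1 hrow
    linarith
  have hAne : A ≠ 0 := by linarith
  have hA0 : (0:ℝ) ≤ A := by linarith
  have key : Dfun Q A x₂ y₂ - Dfun Q A x₁ y₂ - Dfun Q A x₂ y₁ + Dfun Q A x₁ y₁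
      = ((NN Q x₂ y₂ - NN Q x₁ y₂ - NN Q x₂ y₁ + NN Q x₁ y₁)
        + ((A*x₂ - NN Q x₂ 1) - (A*x₁ - NN Q x₁ 1))
          * ((A*y₂ - NN Q 1 y₂) - (A*y₁ - NN Q 1 y₁)) / (A - NN Q 1 1))/A := by
    unfold Dfun
    field_simp
    ring
  rw [key]
  apply div_nonneg _ hA0
  apply add_nonneg (NN_rect hM hA1 hrow hcol hx1 hx hx2 hy1 hy hy2)
  apply div_nonneg _ hm0
  apply mul_nonneg
  · have := rx_incr hM hA1 hrow hcol hx1 hx hx2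
    linarith
  · have := ry_incr hM hA1 hrow hcol hy1 hy hy2
    linarith

include hM hA1 hrow hcol hL in
lemma Cfun_rect {x₁ x₂ y₁ y₂ : ℝ} (hx1 : 0 ≤ x₁) (hx : x₁ ≤ x₂) (hx2 : x₂ ≤ 1)
    (hy1 : 0 ≤ y₁) (hy : y₁ ≤ y₂) (hy2 : y₂ ≤ 1) :
    0 ≤ Cfun Q A x₂ y₂ - Cfun Q A x₁ y₂ - Cfun Q A x₂ y₁ + Cfun Q A x₁ y₁ := by
  have hmne : A - NN Q 1 1 ≠ 0 := by
    have := mass_ge hM hA1 hrow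
    linarith
  have hm0 : (0:ℝ) ≤ A - NN Q 1 1 := by
    have := mass_ge hM hA1 hrow
    linarith
  have hAne : A ≠ 0 := by linarith
  have hA0 : (0:ℝ) ≤ A := by linarith
  have hA1ne : A + 1 ≠ 0 := by linarith
  have hA10 : (0:ℝ) ≤ A + 1 := by linarith
  have key : Cfun Q A x₂ y₂ - Cfun Q A x₁ y₂ - Cfun Q A x₂ y₁ + Cfun Q A x₁ y₁
      = (((Q x₂ y₂ - Q x₁ y₂ - Q x₂ y₁ + Q x₁ y₁)
          + (NN Q x₂ y₂ - NN Q x₁ y₂ - NN Q x₂ y₁ + NN Q x₁ y₁))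
        + ((A*x₂ - NN Q x₂ 1) - (A*x₁ - NN Q x₁ 1))
          * ((A*y₂ - NN Q 1 y₂) - (A*y₁ - NN Q 1 y₁)) / (A - NN Q 1 1))/(A+1) := by
    unfold Cfun Dfun
    field_simp
    ring
  rw [key]
  apply div_nonneg _ hA10
  apply add_nonneg (NN_rect_Q hM hA1 hrow hcol hL hx1 hx hx2 hy1 hy hy2)
  apply div_nonneg _ hm0
  apply mul_nonneg
  · have := rx_incr hM hA1 hrow hcol hx1 hx hx2
    linarith
  · have := ry_incr hM hA1 hrow hcol hy1 hy hy2
    linarith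

end Main

end S15

theorem stmt15 (Q : ℝ → ℝ → ℝ) (hQ : IsQuasiCopula Q)
    (hbdd : BddAbove (alphaSet Q)) :
    ∃ (C D : ℝ → ℝ → ℝ) (α : ℝ), IsCopula C ∧ IsCopula D ∧ 1 ≤ α ∧
      ∀ x ∈ Icc (0:ℝ) 1, ∀ y ∈ Icc (0:ℝ) 1,
        Q x y = α * C x y + (1 - α) * D x y := by
  obtain ⟨hM, hmono1, hmono2, hL⟩ := hQ
  set A := max (sSup (alphaSet Q)) 1 with hAdef
  have hA1 : (1:ℝ) ≤ A := le_max_right _ _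
  have hrow : ∀ n, 1 ≤ n → ∀ i, i < 2^n →
      ∑ j ∈ Finset.range (2^n), S15.posV Q n i j ≤ A/2^n := by
    intro n hn i hi
    have hmem : (2:ℝ)^n * ∑ j : Fin (2^n), max (dyadVol Q n ⟨i, hi⟩ j) 0 ∈ alphaSet Q :=
      ⟨n, hn, Or.inl ⟨⟨i, hi⟩, rfl⟩⟩
    have hle : (2:ℝ)^n * ∑ j : Fin (2^n), max (dyadVol Q n ⟨i, hi⟩ j) 0 ≤ A :=
      le_trans (le_csSup hbdd hmem) (le_max_left _ _)
    have hsum : ∑ j : Fin (2^n), max (dyadVol Q n ⟨i, hi⟩ j) 0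
        = ∑ j ∈ Finset.range (2^n), S15.posV Q n i j := by
      rw [← Fin.sum_univ_eq_sum_range (fun j => S15.posV Q n i j) (2^n)]
      apply Finset.sum_congr rfl
      intro j _
      rfl
    rw [hsum] at hle
    rw [le_div_iff₀ (S15.two_pow_pos n)]
    linarith
  have hcol : ∀ n, 1 ≤ n → ∀ j, j < 2^n →
      ∑ i ∈ Finset.range (2^n), S15.posV Q n i j ≤ A/2^n := by
    intro n hn j hj
    have hmem : (2:ℝ)^n * ∑ i : Fin (2^n), max (dyadVol Q n i ⟨j, hj⟩) 0 ∈ alphaSet Q :=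
      ⟨n, hn, Or.inr ⟨⟨j, hj⟩, rfl⟩⟩
    have hle : (2:ℝ)^n * ∑ i : Fin (2^n), max (dyadVol Q n i ⟨j, hj⟩) 0 ≤ A :=
      le_trans (le_csSup hbdd hmem) (le_max_left _ _)
    have hsum : ∑ i : Fin (2^n), max (dyadVol Q n i ⟨j, hj⟩) 0
        = ∑ i ∈ Finset.range (2^n), S15.posV Q n i j := by
      rw [← Fin.sum_univ_eq_sum_range (fun i => S15.posV Q n i j) (2^n)]
      apply Finset.sum_congr rfl
      intro i _
      rfl
    rw [hsum] at hle
    rw [le_div_iff₀ (S15.two_pow_pos n)]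
    linarith
  have hA0 : (0:ℝ) < A := by linarith
  have hAne : A ≠ 0 := ne_of_gt hA0
  have hA1ne : A + 1 ≠ 0 := by linarith
  refine ⟨S15.Cfun Q A, S15.Dfun Q A, A+1, ⟨?_, ?_⟩, ⟨?_, ?_⟩, by linarith, ?_⟩
  · -- C margins
    intro x hx
    have hD0 := S15.Dfun_x0 (A := A) hM hA1 hrow hx.1
    have hD0' := S15.Dfun_0y (A := A) hM hA1 hrow hx.1
    have hD1 := S15.Dfun_margin_x1 (A := A) (x := x) hM hA1 hrow
    have hD1' := S15.Dfun_margin_1y (A := A) (y := x) hM hA1 hrow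
    have hQm := hM x hx
    refine ⟨?_, ?_, ?_, ?_⟩
    · show (Q x 0 + A * S15.Dfun Q A x 0)/(A+1) = 0
      rw [hQm.1, hD0]; ring
    · show (Q 0 x + A * S15.Dfun Q A 0 x)/(A+1) = 0
      rw [hQm.2.1, hD0']; ring
    · show (Q x 1 + A * S15.Dfun Q A x 1)/(A+1) = x
      rw [hQm.2.2.1, hD1]; field_simp; ring
    · show (Q 1 x + A * S15.Dfun Q A 1 x)/(A+1) = x
      rw [hQm.2.2.2, hD1']; field_simp; ring
  · -- C 2-increasing
    intro x₁ hx₁ x₂ hx₂ y₁ hy₁ y₂ hy₂ h12x h12y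
    exact S15.Cfun_rect hM hA1 hrow hcol hL hx₁.1 h12x hx₂.2 hy₁.1 h12y hy₂.2
  · -- D margins
    intro x hx
    exact ⟨S15.Dfun_x0 hM hA1 hrow hx.1, S15.Dfun_0y hM hA1 hrow hx.1,
      S15.Dfun_margin_x1 hM hA1 hrow, S15.Dfun_margin_1y hM hA1 hrow⟩
  · -- D 2-increasing
    intro x₁ hx₁ x₂ hx₂ y₁ hy₁ y₂ hy₂ h12x h12y
    exact S15.Dfun_rect hM hA1 hrow hcol hx₁.1 h12x hx₂.2 hy₁.1 h12y hy₂.2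
  · -- decomposition
    intro x hx y hy
    show Q x y = (A+1) * ((Q x y + A * S15.Dfun Q A x y)/(A+1)) + (1-(A+1)) * S15.Dfun Q A x y
    field_simp
    ring
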